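/- For the A_{n+2} hyperplane arrangement D = Σ_{i<j} H_{i,j} in ℂP^n (with H_{i,j} = {z_i = z_j} on {Σ_{i=0}^{n+1} z_i = 0}), the number of hyperplanes is ℓ = (n+1)(n+2)/2 and the quantity m(D) = min over nonempty subsets I of pairs with ∩_{(i,j)∈I} H_{i,j} ≠ ∅ of codim(∩_{(i,j)∈I} H_{i,j}) / #I satisfies ℓ · m(D) = n + 2 > n + 1. -/

import Mathlib

lemma two_mul_card_filter_lt {α : Type*} [DecidableEq α] [LinearOrder α] (s : Finset α) :
    2 * ((s ×ˢ s).filter fun p => p.1 < p.2).card = s.card * s.card - s.card := by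
  classical
  have h1 : ((s ×ˢ s).filter fun p => p.1 < p.2).card
      = ((s ×ˢ s).filter fun p => p.2 < p.1).card := by
    apply Finset.card_nbij' Prod.swap Prod.swap
    · intro a ha; simp_all [Finset.mem_filter, Finset.mem_product]
    · intro a ha; simp_all [Finset.mem_filter, Finset.mem_product]
    · intro a _; rfl
    · intro a _; rfl
  have h2 : ((s ×ˢ s).filter fun p => p.1 < p.2) ∪ ((s ×ˢ s).filter fun p => p.2 < p.1)
      = s.offDiag := by
    rw [← Finset.filter_or]
    ext p
    simp only [Finset.mem_filter, Finset.mem_offDiag, Finset.mem_product]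
    constructor
    · rintro ⟨⟨h1, h2⟩, (h | h)⟩
      · exact ⟨h1, h2, ne_of_lt h⟩
      · exact ⟨h1, h2, ne_of_gt h⟩
    · rintro ⟨h1, h2, h⟩; exact ⟨⟨h1, h2⟩, lt_or_gt_of_ne h⟩
  have h3 : Disjoint ((s ×ˢ s).filter fun p => p.1 < p.2)
      ((s ×ˢ s).filter fun p => p.2 < p.1) :=
    Finset.disjoint_filter_filter' _ _ (by
      rw [disjoint_iff_inf_le]; intro p hp; exact absurd hp.2 (not_lt_of_gt hp.1))
  have h4 := Finset.card_union_of_disjoint h3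
  rw [h2, Finset.offDiag_card] at h4
  omega
open SimpleGraph

variable {N : ℕ}

abbrev EP (N : ℕ) := {e : Fin N × Fin N // e.1 < e.2}


def bg (I : Finset (EP N)) : SimpleGraph (Fin N) :=
  SimpleGraph.fromRel (fun i j => ∃ h : i < j, (⟨(i,j), h⟩ : EP N) ∈ I)

noncomputable instance (I : Finset (EP N)) : Fintype (bg I).ConnectedComponent := by
  classical
  exact Fintype.ofSurjective (bg I).connectedComponentMk (Quot.mk_surjective)

lemma bg_adj_of_mem {I : Finset (EP N)} {e : EP N} (he : e ∈ I) : (bg I).Adj e.1.1 e.1.2 := by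
  rw [bg, SimpleGraph.fromRel_adj]
  exact ⟨ne_of_lt e.2, Or.inl ⟨e.2, by simpa using he⟩⟩

lemma comp_eq_of_mem {I : Finset (EP N)} {e : EP N} (he : e ∈ I) :
    (bg I).connectedComponentMk e.1.1 = (bg I).connectedComponentMk e.1.2 :=
  ConnectedComponent.sound (bg_adj_of_mem he).reachable

noncomputable def Heqd (e : EP N) : Submodule ℂ (Fin N → ℂ) :=
  LinearMap.ker ((LinearMap.proj e.1.1 : (Fin N → ℂ) →ₗ[ℂ] ℂ) - LinearMap.proj e.1.2)

lemma mem_iInf_Heqd {I : Finset (EP N)} {x : Fin N → ℂ} :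
    x ∈ (⨅ e ∈ I, Heqd e) ↔ ∀ e ∈ I, x e.1.1 = x e.1.2 := by
  simp only [Submodule.mem_iInf, Heqd, LinearMap.mem_ker, LinearMap.sub_apply,
    LinearMap.proj_apply, sub_eq_zero]

lemma range_funLeft (I : Finset (EP N)) :
    LinearMap.range (LinearMap.funLeft ℂ ℂ ((bg I).connectedComponentMk)) =
      ⨅ e ∈ I, Heqd e := by
  apply le_antisymm
  · rintro x ⟨g, rfl⟩
    rw [mem_iInf_Heqd]
    intro e he
    simp only [LinearMap.funLeft_apply, Function.comp_apply]
    rw [comp_eq_of_mem he]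
  · intro x hx
    rw [mem_iInf_Heqd] at hx
    have hadj : ∀ i j, (bg I).Adj i j → x i = x j := by
      intro i j hij
      rw [bg, SimpleGraph.fromRel_adj] at hij
      rcases hij with ⟨hne, (⟨h, hm⟩ | ⟨h, hm⟩)⟩
      · exact hx _ hm
      · exact (hx _ hm).symm
    have hwalk : ∀ {i j : Fin N} (w : (bg I).Walk i j), x i = x j := by
      intro i j w
      induction w with
      | nil => rfl
      | cons h _ ih => exact (hadj _ _ h).trans ih
    have hreach : ∀ {i j : Fin N}, (bg I).Reachable i j → x i = x j :=
      fun h => h.elim hwalk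
    refine ⟨fun c => x c.out, funext fun i => ?_⟩
    simp only [LinearMap.funLeft_apply, Function.comp_apply]
    exact hreach (ConnectedComponent.exact (Quot.out_eq _))


lemma finrank_iInf_Heqd (I : Finset (EP N)) :
    Module.finrank ℂ ↥(⨅ e ∈ I, Heqd e) = Fintype.card (bg I).ConnectedComponent := by
  have hsurj : Function.Surjective ((bg I).connectedComponentMk) := Quot.mk_surjective
  rw [← range_funLeft, LinearMap.finrank_range_of_inj
    (LinearMap.funLeft_injective_of_surjective ℂ ℂ _ hsurj)]
  exact Module.finrank_pi ℂ

noncomputable def sigmaN (N : ℕ) : (Fin N → ℂ) →ₗ[ℂ] ℂ :=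
  ∑ i : Fin N, (LinearMap.proj i : (Fin N → ℂ) →ₗ[ℂ] ℂ)

lemma sigmaN_apply (x : Fin N → ℂ) : sigmaN N x = ∑ i, x i := by
  simp [sigmaN]

lemma ones_mem_iInf (I : Finset (EP N)) : (fun _ => 1 : Fin N → ℂ) ∈ ⨅ e ∈ I, Heqd e := by
  rw [mem_iInf_Heqd]; intros; rfl

set_option synthInstance.maxHeartbeats 1000000 in
lemma finrank_inf (hN : 0 < N) (I : Finset (EP N)) :
    Fintype.card (bg I).ConnectedComponent =
      Module.finrank ℂ ↥((⨅ e ∈ I, Heqd e) ⊓ LinearMap.ker (sigmaN N)) + 1 := by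
  classical
  have hNC : (N : ℂ) ≠ 0 := Nat.cast_ne_zero.mpr hN.ne'
  let ρ : ↥(⨅ e ∈ I, Heqd e) →ₗ[ℂ] ℂ := (sigmaN N).domRestrict (⨅ e ∈ I, Heqd e)
  have hker : LinearMap.ker ρ =
      (((⨅ e ∈ I, Heqd e) ⊓ LinearMap.ker (sigmaN N)).comap (⨅ e ∈ I, Heqd e).subtype) := by
    ext ⟨x, hx⟩
    simp only [ρ, LinearMap.mem_ker, LinearMap.domRestrict_apply, Submodule.mem_comap,
      Submodule.subtype_apply, Submodule.mem_inf]
    exact ⟨fun h => ⟨hx, h⟩, fun h => h.2⟩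
  have h1 : sigmaN N (fun _ => 1 : Fin N → ℂ) = N := by
    rw [sigmaN_apply]; simp
  have hrange : LinearMap.range ρ = ⊤ := by
    rw [Submodule.eq_top_iff']
    intro c
    refine ⟨(c / N) • ⟨(fun _ => 1 : Fin N → ℂ), ones_mem_iInf I⟩, ?_⟩
    have : ρ ((c / N) • ⟨(fun _ => 1 : Fin N → ℂ), ones_mem_iInf I⟩)
        = (c / N) • sigmaN N (fun _ => 1 : Fin N → ℂ) := by
      rw [map_smul]; rfl
    rw [this, h1, smul_eq_mul, div_mul_cancel₀ _ hNC]
  have hrn := LinearMap.finrank_range_add_finrank_ker ρ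
  rw [hrange, finrank_top, Module.finrank_self, hker] at hrn
  have heq : Module.finrank ℂ
        ↥(((⨅ e ∈ I, Heqd e) ⊓ LinearMap.ker (sigmaN N)).comap (⨅ e ∈ I, Heqd e).subtype)
      = Module.finrank ℂ ↥((⨅ e ∈ I, Heqd e) ⊓ LinearMap.ker (sigmaN N)) :=
    (Submodule.comapSubtypeEquivOfLe (inf_le_left :
      (⨅ e ∈ I, Heqd e) ⊓ LinearMap.ker (sigmaN N) ≤ ⨅ e ∈ I, Heqd e)).finrank_eq
  have hKc := finrank_iInf_Heqd I
  omega

lemma card_bound (I : Finset (EP N)) (hc : 2 ≤ Fintype.card (bg I).ConnectedComponent) :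
    2 * I.card ≤ (N - 1) * (N - Fintype.card (bg I).ConnectedComponent) := by
  classical
  set c := Fintype.card (bg I).ConnectedComponent with hc'
  let comp := (bg I).connectedComponentMk
  let V : (bg I).ConnectedComponent → Finset (Fin N) := fun K => Finset.univ.filter (comp · = K)
  have hVsum : ∑ K, (V K).card = N := by
    have := Finset.card_eq_sum_card_fiberwise
      (f := comp) (s := Finset.univ) (t := Finset.univ) (fun x _ => Finset.mem_univ _)
    simpa using this.symm
  have hV1 : ∀ K, 1 ≤ (V K).card := by
    intro K
    induction K using SimpleGraph.ConnectedComponent.ind with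
    | _ v =>
      rw [Nat.one_le_iff_ne_zero, ← Nat.pos_iff_ne_zero, Finset.card_pos]
      exact ⟨v, Finset.mem_filter.mpr ⟨Finset.mem_univ _, rfl⟩⟩
  have hVle : ∀ K, (V K).card ≤ N - 1 := by
    intro K
    obtain ⟨K', hK'⟩ := Fintype.exists_ne_of_one_lt_card (by omega) K
    have hdisj : Disjoint (V K) (V K') := by
      rw [Finset.disjoint_left]
      intro a ha ha'
      simp only [V, Finset.mem_filter] at ha ha'
      exact hK' (ha'.2.symm.trans ha.2)
    have hsub : (V K ∪ V K').card ≤ N := by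
      have := Finset.card_le_card (Finset.subset_univ (V K ∪ V K'))
      simpa using this
    rw [Finset.card_union_of_disjoint hdisj] at hsub
    have := hV1 K'
    omega
  have hIsum : I.card = ∑ K, (I.filter (fun e => comp e.1.1 = K)).card :=
    Finset.card_eq_sum_card_fiberwise (fun e _ => Finset.mem_univ _)
  have hperK : ∀ K, 2 * (I.filter (fun e => comp e.1.1 = K)).card
      ≤ (N - 1) * ((V K).card - 1) := by
    intro K
    have hinj : (I.filter (fun e => comp e.1.1 = K)).card
        ≤ (((V K) ×ˢ (V K)).filter fun p => p.1 < p.2).card := by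
      apply Finset.card_le_card_of_injOn (fun e => e.1)
      · intro e he
        rw [Finset.mem_coe, Finset.mem_filter] at he ⊢
        obtain ⟨heI, heK⟩ := he
        have h2 : comp e.1.2 = K := (comp_eq_of_mem heI).symm.trans heK
        refine ⟨Finset.mem_product.mpr ⟨?_, ?_⟩, e.2⟩
        · simp [V, heK]
        · simp [V, h2]
      · intro a _ b _ h
        exact Subtype.ext h
    have hdb := two_mul_card_filter_lt (V K)
    have hm := hVle K
    have hm1 := hV1 K
    calc 2 * (I.filter (fun e => comp e.1.1 = K)).card
        ≤ 2 * (((V K) ×ˢ (V K)).filter fun p => p.1 < p.2).card := by omega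
      _ = (V K).card * (V K).card - (V K).card := hdb
      _ = (V K).card * ((V K).card - 1) := by rw [Nat.mul_sub_one]
      _ ≤ (N - 1) * ((V K).card - 1) := Nat.mul_le_mul_right _ hm
  have hsum1 : ∑ K, ((V K).card - 1) = N - c := by
    have : ∑ K, ((V K).card - 1) + c = N := by
      rw [hc', ← Fintype.card_congr (Equiv.refl _)]
      have : ∑ K : (bg I).ConnectedComponent, ((V K).card - 1 + 1) = ∑ K, (V K).card :=
        Finset.sum_congr rfl (fun K _ => Nat.sub_add_cancel (hV1 K))
      rw [Finset.sum_add_distrib] at this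
      simp only [Finset.sum_const, Finset.card_univ, smul_eq_mul, mul_one] at this
      omega
    omega
  calc 2 * I.card = ∑ K, 2 * (I.filter (fun e => comp e.1.1 = K)).card := by
        rw [hIsum, Finset.mul_sum]
    _ ≤ ∑ K, (N - 1) * ((V K).card - 1) := Finset.sum_le_sum (fun K _ => hperK K)
    _ = (N - 1) * (N - c) := by rw [← Finset.mul_sum, hsum1]

noncomputable def vfun (n : ℕ) : Fin (n + 2) → ℂ :=
  fun i => if i = Fin.last (n + 1) then -(n + 1 : ℂ) else 1

def I0 (n : ℕ) : Finset (EP (n + 2)) :=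
  Finset.univ.filter (fun e => e.1.2 ≠ Fin.last (n + 1))

lemma fst_ne_last {n : ℕ} {e : EP (n + 2)} (he : e ∈ I0 n) :
    e.1.1 ≠ Fin.last (n + 1) ∧ e.1.2 ≠ Fin.last (n + 1) := by
  have h2 : e.1.2 ≠ Fin.last (n + 1) := (Finset.mem_filter.mp he).2
  refine ⟨fun h1 => h2 ?_, h2⟩
  have := e.2
  rw [h1] at this
  exact le_antisymm (Fin.le_last _) this.le |>.symm ▸ rfl

lemma vfun_ne {n : ℕ} {i : Fin (n + 2)} (hi : i ≠ Fin.last (n + 1)) : vfun n i = 1 := by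
  rw [vfun]; exact if_neg hi

lemma vfun_last {n : ℕ} : vfun n (Fin.last (n + 1)) = -(n + 1 : ℂ) := by
  rw [vfun]; exact if_pos rfl

lemma sum_vfun (n : ℕ) : ∑ i, vfun n i = 0 := by
  rw [Fin.sum_univ_castSucc]
  rw [vfun_last, Finset.sum_congr rfl
    (fun i _ => vfun_ne (ne_of_lt (Fin.castSucc_lt_last i)))]
  simp

lemma S_I0 (n : ℕ) (hn : 1 ≤ n) :
    ((⨅ e ∈ I0 n, Heqd e) ⊓ LinearMap.ker (sigmaN (n + 2))) =
      Submodule.span ℂ {vfun n} := by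
  apply le_antisymm
  · rintro x hx
    rw [Submodule.mem_inf, mem_iInf_Heqd, LinearMap.mem_ker] at hx
    obtain ⟨hx1, hx2⟩ := hx
    rw [sigmaN_apply] at hx2
    have key : ∀ i : Fin (n + 2), i ≠ Fin.last (n + 1) → x i = x 0 := by
      intro i hi
      rcases eq_or_ne i 0 with rfl | h0
      · rfl
      · have hlt : (0 : Fin (n + 2)) < i := Fin.pos_of_ne_zero h0
        exact (hx1 ⟨(0, i), hlt⟩ (Finset.mem_filter.mpr ⟨Finset.mem_univ _, hi⟩)).symm
    have hsum : ∑ i, x i = (n + 1 : ℂ) * x 0 + x (Fin.last (n + 1)) := by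
      rw [Fin.sum_univ_castSucc]
      congr 1
      rw [Finset.sum_congr rfl
        (fun i _ => key i.castSucc (ne_of_lt (Fin.castSucc_lt_last i)))]
      simp [mul_comm]
    have hlast : x (Fin.last (n + 1)) = -(n + 1 : ℂ) * x 0 := by
      rw [hsum] at hx2; linear_combination hx2
    rw [Submodule.mem_span_singleton]
    refine ⟨x 0, funext fun i => ?_⟩
    rcases eq_or_ne i (Fin.last (n + 1)) with rfl | hi
    · simp only [Pi.smul_apply, vfun_last, smul_eq_mul, hlast]; ring
    · simp only [Pi.smul_apply, vfun_ne hi, smul_eq_mul, mul_one]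
      exact (key i hi).symm
  · rw [Submodule.span_le, Set.singleton_subset_iff]
    rw [SetLike.mem_coe, Submodule.mem_inf, mem_iInf_Heqd, LinearMap.mem_ker]
    constructor
    · intro e he
      obtain ⟨h1, h2⟩ := fst_ne_last he
      rw [vfun_ne h1, vfun_ne h2]
    · rw [sigmaN_apply]; exact sum_vfun n

lemma card_I0 (n : ℕ) : 2 * (I0 n).card = n * (n + 1) := by
  classical
  have hbij : (I0 n).card =
      (((Finset.univ.erase (Fin.last (n + 1))) ×ˢ (Finset.univ.erase (Fin.last (n + 1)))).filter
        fun p => p.1 < p.2).card := by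
    apply Finset.card_nbij (fun e => e.1)
    · intro e he
      obtain ⟨h1, h2⟩ := fst_ne_last he
      rw [Finset.mem_coe, Finset.mem_filter, Finset.mem_product]
      exact ⟨⟨Finset.mem_erase.mpr ⟨h1, Finset.mem_univ _⟩,
        Finset.mem_erase.mpr ⟨h2, Finset.mem_univ _⟩⟩, e.2⟩
    · intro a _ b _ h
      exact Subtype.ext h
    · intro p hp
      rw [Finset.coe_filter] at hp
      obtain ⟨hps, hplt⟩ := hp
      rw [Finset.mem_product] at hps
      refine ⟨⟨p, hplt⟩, ?_, rfl⟩
      simp only [Finset.mem_coe, I0, Finset.mem_filter, Finset.mem_univ, true_and]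
      exact (Finset.mem_erase.mp hps.2).1
  have hdb := two_mul_card_filter_lt (Finset.univ.erase (Fin.last (n + 1)) : Finset (Fin (n + 2)))
  have hcard : (Finset.univ.erase (Fin.last (n + 1)) : Finset (Fin (n + 2))).card = n + 1 := by
    rw [Finset.card_erase_of_mem (Finset.mem_univ _), Finset.card_univ, Fintype.card_fin]
    omega
  rw [hbij, hdb, hcard, Nat.succ_mul, Nat.add_sub_cancel]


/-- The A_{n+2} braid arrangement in ℂPⁿ = {Σ z = 0} ⊂ ℂP^{n+1}: the number of
hyperplanes `H_{i,j} = {z_i = z_j}` is `ℓ = (n+1)(n+2)/2`, the quantity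
`m(D) = min codim(∩_{e∈I} H_e)/#I` (over index sets with nonempty projective
intersection, codim taken in ℂPⁿ) equals `2/(n+1)`, and `ℓ·m(D) = n+2 > n+1`. -/
theorem stmt_6 (n : ℕ) (hn : 1 ≤ n) :
    let E := {e : Fin (n + 2) × Fin (n + 2) // e.1 < e.2}
    let Heq : E → Submodule ℂ (Fin (n + 2) → ℂ) := fun e =>
      LinearMap.ker ((LinearMap.proj e.1.1 : (Fin (n + 2) → ℂ) →ₗ[ℂ] ℂ) - LinearMap.proj e.1.2)
    let W : Submodule ℂ (Fin (n + 2) → ℂ) :=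
      LinearMap.ker (∑ i : Fin (n + 2), (LinearMap.proj i : (Fin (n + 2) → ℂ) →ₗ[ℂ] ℂ))
    let S : Finset E → Submodule ℂ (Fin (n + 2) → ℂ) := fun I => (⨅ e ∈ I, Heq e) ⊓ W
    Fintype.card E = (n + 1) * (n + 2) / 2 ∧
    (∀ I : Finset E, I.Nonempty → 1 ≤ Module.finrank ℂ ↥(S I) →
      (2 : ℚ) / ((n : ℚ) + 1) ≤ ((n : ℚ) + 1 - Module.finrank ℂ ↥(S I)) / I.card) ∧
    (∃ I : Finset E, I.Nonempty ∧ 1 ≤ Module.finrank ℂ ↥(S I) ∧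
      ((n : ℚ) + 1 - Module.finrank ℂ ↥(S I)) / I.card = (2 : ℚ) / ((n : ℚ) + 1)) ∧
    (((n : ℚ) + 1) * ((n : ℚ) + 2) / 2) * ((2 : ℚ) / ((n : ℚ) + 1)) = (n : ℚ) + 2 ∧
    (n : ℚ) + 1 < (n : ℚ) + 2 := by
  intro E Heq W S
  have hn1Q : (0 : ℚ) < (n : ℚ) + 1 := by positivity
  refine ⟨?_, ?_, ?_, ?_, ?_⟩
  · -- card E
    have h := two_mul_card_filter_lt (Finset.univ : Finset (Fin (n + 2)))
    have h2 : Fintype.card E = ((Finset.univ ×ˢ Finset.univ).filter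
        (fun p : Fin (n + 2) × Fin (n + 2) => p.1 < p.2)).card := by
      rw [Fintype.card_subtype, ← Finset.univ_product_univ]
    have h3 : 2 * Fintype.card E = (n + 1) * (n + 2) := by
      rw [h2, h, Finset.card_univ, Fintype.card_fin]
      exact Nat.sub_eq_of_eq_add (by ring)
    obtain ⟨m, hm⟩ : ∃ m, (n + 1) * (n + 2) = m := ⟨_, rfl⟩
    rw [hm] at h3 ⊢
    omega
  · -- main inequality
    intro I hne hrk
    have hf : Fintype.card (bg I).ConnectedComponent = Module.finrank ℂ ↥(S I) + 1 :=
      finrank_inf (N := n + 2) (by omega) I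
    set d := Module.finrank ℂ ↥(S I) with hd
    have hcle : Fintype.card (bg I).ConnectedComponent ≤ n + 2 := by
      have := Fintype.card_le_of_surjective ((bg I).connectedComponentMk) Quot.mk_surjective
      simpa using this
    have hb := card_bound I (by omega)
    have hd' : d ≤ n + 1 := by omega
    have hrw1 : n + 2 - 1 = n + 1 := by omega
    have hrw2 : n + 2 - Fintype.card (bg I).ConnectedComponent = n + 1 - d := by omega
    rw [hrw1, hrw2] at hb
    have hpos : 0 < I.card := Finset.card_pos.mpr hne
    have hcQ : (0 : ℚ) < (I.card : ℚ) := by exact_mod_cast hpos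
    rw [div_le_div_iff₀ hn1Q hcQ]
    have hbQ : ((2 * I.card : ℕ) : ℚ) ≤ (((n + 1) * (n + 1 - d) : ℕ) : ℚ) := by
      exact_mod_cast hb
    push_cast [Nat.cast_sub hd'] at hbQ
    nlinarith [hbQ]
  · -- existence
    have h01 : ((0 : Fin (n + 2)), (1 : Fin (n + 2))).1 < ((0 : Fin (n + 2)), (1 : Fin (n + 2))).2 := by
      simp only []
      rw [Fin.lt_def, Fin.val_zero, Fin.val_one]
      omega
    have hmem : (⟨((0 : Fin (n + 2)), (1 : Fin (n + 2))), h01⟩ : EP (n + 2)) ∈ I0 n := by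
      rw [I0, Finset.mem_filter]
      refine ⟨Finset.mem_univ _, ?_⟩
      simp only [ne_eq, Fin.ext_iff, Fin.val_one, Fin.val_last]
      omega
    have hv0 : vfun n ≠ 0 := by
      intro h
      have h0 : (0 : Fin (n + 2)) ≠ Fin.last (n + 1) := by
        simp only [ne_eq, Fin.ext_iff, Fin.val_zero, Fin.val_last]
        omega
      have := congrFun h 0
      rw [vfun_ne h0] at this
      simpa using this
    have hfr : Module.finrank ℂ ↥(S (I0 n)) = 1 := by
      have hS : S (I0 n) = Submodule.span ℂ {vfun n} := S_I0 n hn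
      rw [hS, finrank_span_singleton hv0]
    refine ⟨I0 n, ⟨_, hmem⟩, by rw [hfr], ?_⟩
    have hc := card_I0 n
    have hpos : 0 < (I0 n).card := by
      rcases Nat.eq_zero_or_pos (I0 n).card with h | h
      · rw [h, mul_zero] at hc
        rcases Nat.mul_eq_zero.mp hc.symm with h' | h' <;> omega
      · exact h
    have hcQ : (0 : ℚ) < ((I0 n).card : ℚ) := by exact_mod_cast hpos
    have hcQ2 : ((2 * (I0 n).card : ℕ) : ℚ) = ((n * (n + 1) : ℕ) : ℚ) := by rw [hc]
    push_cast at hcQ2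
    rw [hfr, div_eq_div_iff hcQ.ne' hn1Q.ne']
    push_cast
    linear_combination -hcQ2
  · have hne : (n : ℚ) + 1 ≠ 0 := ne_of_gt hn1Q
    field_simp
  · linarith
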